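/- Let G be a finite group, p a prime, N = O_p(G) the p-core of G, and a, b ∈ G p-regular elements. If aN and bN are conjugate in G/N, then a and b are conjugate in G. -/

import Mathlib

-- Abelian case
open scoped IsMulCommutative in
lemma abelian_case {G : Type*} [Group G] [Finite G] {p : ℕ} (hp : p.Prime)
    (N : Subgroup G) [N.Normal] [IsMulCommutative N] (hN : IsPGroup p N)
    {a c : G} (ha : ¬ p ∣ orderOf a) (hc : ¬ p ∣ orderOf c) (hm : c⁻¹ * a ∈ N) :
    IsConj a c := by
  haveI : Fact p.Prime := ⟨hp⟩
  set m : ℕ := Nat.lcm (orderOf a) (orderOf c) with hmdef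
  have ham : a ^ m = 1 := orderOf_dvd_iff_pow_eq_one.mp (Nat.dvd_lcm_left _ _)
  have hcm : c ^ m = 1 := orderOf_dvd_iff_pow_eq_one.mp (Nat.dvd_lcm_right _ _)
  have hpm : ¬ p ∣ m := by
    intro hdvd
    rcases (Nat.Prime.dvd_mul hp).mp (hdvd.trans (Nat.lcm_dvd_mul _ _)) with h | h
    · exact ha h
    · exact hc h
  have hcop : (Nat.card N).Coprime m := by
    obtain ⟨e, he⟩ := IsPGroup.iff_card.mp hN
    rw [he]
    exact Nat.Coprime.pow_left e (hp.coprime_iff_not_dvd.mpr hpm)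
  set n : N := ⟨c⁻¹ * a, hm⟩ with hn
  have hca : a = c * (n : G) := by simp [hn]
  set θ : N ≃* N := (MulAut.conjNormal c)⁻¹ with hθ
  have hθcoe : ∀ y : N, ((θ y : N) : G) = c⁻¹ * y * c := fun y =>
    MulAut.conjNormal_inv_apply c y
  set nk : ℕ → N := fun k => Nat.rec (1 : N) (fun _ y => θ y * n) k with hnk
  have hnk0 : nk 0 = 1 := rfl
  have hnks : ∀ k, nk (k + 1) = θ (nk k) * n := fun k => rfl
  have key : ∀ k, c ^ k * ((nk k : N) : G) = a ^ k := by
    intro k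
    induction k with
    | zero => simp [hnk0]
    | succ k ih =>
      rw [pow_succ, pow_succ, ← ih, hnks, hca]
      push_cast
      rw [hθcoe]
      group
  have hnkm : nk m = 1 := by
    have := key m
    rw [ham, hcm, one_mul] at this
    exact Subtype.ext this
  set D : N := ∏ k ∈ Finset.range m, nk k with hD
  have hDkey : θ D * n ^ m = D := by
    have h1 : θ D * n ^ m = ∏ k ∈ Finset.range m, (θ (nk k) * n) := by
      rw [Finset.prod_mul_distrib, ← map_prod, ← hD, Finset.prod_const,
        Finset.card_range]
    have h2 : ∏ k ∈ Finset.range m, (θ (nk k) * n) = ∏ k ∈ Finset.range m, nk (k + 1) := by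
      exact Finset.prod_congr rfl fun k _ => (hnks k).symm
    have h3 : ∏ k ∈ Finset.range (m + 1), nk k = (∏ k ∈ Finset.range m, nk (k + 1)) * nk 0 :=
      Finset.prod_range_succ' nk m
    have h4 : ∏ k ∈ Finset.range (m + 1), nk k = D * nk m := Finset.prod_range_succ nk m
    rw [h1, h2]
    rw [h3, hnk0, mul_one] at h4
    rw [h4, hnkm, mul_one]
  set E : N := (powCoprime hcop).symm D with hE
  have hEm : E ^ m = D := by
    have := (powCoprime hcop).apply_symm_apply D
    rwa [powCoprime_apply] at this
  have hEkey : θ E * n = E := by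
    apply hcop.pow_left_bijective.injective
    show (θ E * n) ^ m = E ^ m
    rw [mul_pow, ← map_pow, hEm, hDkey]
  refine isConj_iff.mpr ⟨(E : G), ?_⟩
  have : (E : G) * a = c * E := by
    rw [hca, ← mul_assoc]
    have h5 : (E : G) * c = c * (θ E : G) := by
      rw [hθcoe]; group
    rw [h5, mul_assoc, ← Subgroup.coe_mul, hEkey]
  rw [this, mul_assoc, mul_inv_cancel, mul_one]

lemma general_case (k : ℕ) : ∀ {G : Type*} [Group G] [Finite G] {p : ℕ}, p.Prime →
    ∀ (N : Subgroup G) [N.Normal], IsPGroup p N → Nat.card N ≤ k →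
    ∀ {a c : G}, ¬ p ∣ orderOf a → ¬ p ∣ orderOf c → c⁻¹ * a ∈ N → IsConj a c := by
  induction k with
  | zero =>
    intro G _ _ p hp N _ hN hk a c ha hc hm
    have := Nat.card_pos (α := N)
    omega
  | succ k ih =>
    intro G _ _ p hp N _ hN hk a c ha hc hm
    by_cases htriv : Nat.card N = 1
    · have hbot : N = ⊥ := Subgroup.card_eq_one.mp htriv
      rw [hbot, Subgroup.mem_bot, inv_mul_eq_one] at hm
      rw [hm]
    · haveI : Fact p.Prime := ⟨hp⟩
      haveI : Nontrivial N := Finite.one_lt_card_iff_nontrivial.mp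
        (lt_of_le_of_ne (Nat.one_le_iff_ne_zero.mpr (Nat.card_pos (α := N)).ne')
          (Ne.symm htriv))
      haveI : Nontrivial (Subgroup.center N) := hN.center_nontrivial
      set Z : Subgroup G := (Subgroup.center N).map N.subtype with hZ
      haveI hZn : Z.Normal := ConjAct.normal_of_characteristic_of_normal
      have hZle : Z ≤ N := Subgroup.map_subtype_le _
      haveI hZcomm : IsMulCommutative Z := by
        constructor
        constructor
        rintro ⟨x, hx⟩ ⟨y, hy⟩
        obtain ⟨x', hx', rfl⟩ := hx
        obtain ⟨y', hy', rfl⟩ := hy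
        have hcomm : y' * x' = x' * y' := Subgroup.mem_center_iff.mp hx' y'
        have h2 : ((x' * y' : N) : G) = ((y' * x' : N) : G) := congrArg _ hcomm.symm
        ext
        simpa using h2
      have hZp : IsPGroup p Z := (hN.to_subgroup (Subgroup.center N)).map N.subtype
      set φ : G →* G ⧸ Z := QuotientGroup.mk' Z with hφ
      set M : Subgroup (G ⧸ Z) := N.map φ with hM
      haveI hMn : M.Normal := (inferInstance : N.Normal).map φ (QuotientGroup.mk'_surjective Z)
      have hMp : IsPGroup p M := hN.map φ
      -- cardinality bound
      set ψ : N →* G ⧸ Z := φ.comp N.subtype with hψ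
      have hrange : ψ.range = M := by
        ext x
        simp [hψ, hM, Subgroup.mem_map, MonoidHom.mem_range, SetLike.exists]
      have hcard1 : Nat.card N = Nat.card (N ⧸ ψ.ker) * Nat.card ψ.ker :=
        Subgroup.card_eq_card_quotient_mul_card_subgroup ψ.ker
      have hcard2 : Nat.card (N ⧸ ψ.ker) = Nat.card M := by
        rw [← hrange]
        exact Nat.card_congr (QuotientGroup.quotientKerEquivRange ψ).toEquiv
      have hker : Nontrivial ψ.ker := by
        obtain ⟨z, hz⟩ := exists_ne (1 : Subgroup.center N)
        refine ⟨⟨(z : N), ?_⟩, 1, ?_⟩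
        · rw [MonoidHom.mem_ker, hψ, MonoidHom.comp_apply]
          rw [hφ, QuotientGroup.mk'_apply, QuotientGroup.eq_one_iff]
          exact ⟨z, z.2, rfl⟩
        · simp only [ne_eq, Subtype.ext_iff, Subgroup.coe_one]
          intro hcontra
          exact hz (by ext; simpa using hcontra)
      have hkerlt : 2 ≤ Nat.card ψ.ker := Finite.one_lt_card_iff_nontrivial.mpr hker
      have hMcard : Nat.card M ≤ k := by
        have h1 : Nat.card M ≥ 1 := Nat.card_pos
        nlinarith [hcard1, hcard2, hk]
      have haM : ¬ p ∣ orderOf (φ a) := fun hd => ha (hd.trans (orderOf_map_dvd φ a))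
      have hcM : ¬ p ∣ orderOf (φ c) := fun hd => hc (hd.trans (orderOf_map_dvd φ c))
      have hmM : (φ c)⁻¹ * φ a ∈ M := by
        rw [← map_inv, ← map_mul]
        exact Subgroup.mem_map_of_mem φ hm
      have hconj := ih hp M hMp hMcard haM hcM hmM
      obtain ⟨u, hu⟩ := isConj_iff.mp hconj
      obtain ⟨g, rfl⟩ := QuotientGroup.mk'_surjective Z u
      have hu' : φ (g * a * g⁻¹) = φ c := by
        rw [map_mul, map_mul, map_inv]; exact hu
      have hmem : c⁻¹ * (g * a * g⁻¹) ∈ Z := by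
        have := (QuotientGroup.eq (s := Z) (a := c) (b := g * a * g⁻¹)).mp hu'.symm
        exact this
      have horder : orderOf (g * a * g⁻¹) = orderOf a := by
        refine (SemiconjBy.orderOf_eq g ?_).symm
        show g * a = g * a * g⁻¹ * g
        group
      have h2 : IsConj (g * a * g⁻¹) c :=
        abelian_case hp Z hZp (horder ▸ ha) hc hmem
      exact (isConj_iff.mpr ⟨g, rfl⟩).trans h2

theorem isConj_of_isConj_quotient_pCore (G : Type*) [Group G] [Finite G]
    (p : ℕ) (hp : p.Prime) (N : Subgroup G) [N.Normal] (hN : IsPGroup p N)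
    (hmax : ∀ K : Subgroup G, K.Normal → IsPGroup p K → K ≤ N)
    (a b : G) (ha : ¬ p ∣ orderOf a) (hb : ¬ p ∣ orderOf b)
    (h : IsConj ((a : G ⧸ N)) ((b : G ⧸ N))) :
    IsConj a b := by
  obtain ⟨u, hu⟩ := isConj_iff.mp h
  obtain ⟨g, rfl⟩ := QuotientGroup.mk_surjective u
  have hu' : ((g * a * g⁻¹ : G) : G ⧸ N) = (b : G ⧸ N) := by
    rw [← hu]; rfl
  have hmem : b⁻¹ * (g * a * g⁻¹) ∈ N := (QuotientGroup.eq (s := N)).mp hu'.symm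
  have horder : orderOf (g * a * g⁻¹) = orderOf a := by
    refine (SemiconjBy.orderOf_eq g ?_).symm
    show g * a = g * a * g⁻¹ * g
    group
  have h2 : IsConj (g * a * g⁻¹) b :=
    general_case (Nat.card N) hp N hN le_rfl (horder ▸ ha) hb hmem
  exact (isConj_iff.mpr ⟨g, rfl⟩).trans h2
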